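/- arXiv:1506.06822 — 2 statements merged into one kernel-verified Lean document; each statement's English description precedes it below -/
import Mathlib

section
/- Let ρ > 0, N ≥ 1, and ε, θ with 0 < ε < 1/2. Define L(N) = (Nρ(ε² + θ²/4) / (2(1+ε²))) · ((Nρ(1+2ε)/(1+Nρ(1+2ε)))² + (Nρ(1−2ε)/(1+Nρ(1−2ε)))²). Then L(N) is strictly increasing in N and L(N) → ∞ as N → ∞ (provided ε² + θ²/4 > 0). -/
theorem iqu_loss_vs_iqa_ut (ρ ε θ : ℝ) (hρ : 0 < ρ)
    (hε₀ : 0 < ε) (hε : ε < 1 / 2)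
    (hpos : 0 < ε ^ 2 + θ ^ 2 / 4)
    (L : ℝ → ℝ)
    (hL : ∀ N : ℝ, L N =
      (N * ρ * (ε ^ 2 + θ ^ 2 / 4) / (2 * (1 + ε ^ 2)))
        * ((N * ρ * (1 + 2 * ε) / (1 + N * ρ * (1 + 2 * ε))) ^ 2
          + (N * ρ * (1 - 2 * ε) / (1 + N * ρ * (1 - 2 * ε))) ^ 2)) :
    StrictMonoOn L (Set.Ici (1 : ℝ)) ∧
    Filter.Tendsto L Filter.atTop Filter.atTop := by
  have hb2 : 0 < 1 - 2 * ε := by linarith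
  have ha2 : 0 < 1 + 2 * ε := by linarith
  set a := ρ * (1 + 2 * ε) with hadef
  set b := ρ * (1 - 2 * ε) with hbdef
  have ha : 0 < a := mul_pos hρ ha2
  have hb : 0 < b := mul_pos hρ hb2
  set c := ρ * (ε ^ 2 + θ ^ 2 / 4) / (2 * (1 + ε ^ 2)) with hcdef
  have hcpos : 0 < c := by
    apply div_pos (mul_pos hρ hpos)
    nlinarith [sq_nonneg ε]
  have hL' : ∀ N : ℝ, L N =
      c * N * ((a * N / (1 + a * N)) ^ 2 + (b * N / (1 + b * N)) ^ 2) := by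
    intro N
    rw [hL N, hcdef, hadef, hbdef]
    ring
  -- monotonicity of x ↦ x/(1+x) on (0,∞)
  have key : ∀ x y : ℝ, 0 < x → x ≤ y → x / (1 + x) ≤ y / (1 + y) := by
    intro x y hx hxy
    rw [div_le_div_iff₀ (by linarith) (by linarith)]
    nlinarith
  have fpos : ∀ x : ℝ, 0 < x → 0 < x / (1 + x) := fun x hx =>
    div_pos hx (by linarith)
  have keysq : ∀ x y : ℝ, 0 < x → x ≤ y →
      (x / (1 + x)) ^ 2 ≤ (y / (1 + y)) ^ 2 := by
    intro x y hx hxy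
    have h1 := key x y hx hxy
    have h2 := (fpos x hx).le
    nlinarith
  constructor
  · intro M hM N hN hMN
    simp only [Set.mem_Ici] at hM hN
    have hMpos : 0 < M := by linarith
    have hNpos : 0 < N := by linarith
    rw [hL' M, hL' N]
    have h1 : (a * M / (1 + a * M)) ^ 2 ≤ (a * N / (1 + a * N)) ^ 2 :=
      keysq _ _ (mul_pos ha hMpos) (by nlinarith)
    have h2 : (b * M / (1 + b * M)) ^ 2 ≤ (b * N / (1 + b * N)) ^ 2 :=
      keysq _ _ (mul_pos hb hMpos) (by nlinarith)
    have h3 : 0 < (a * M / (1 + a * M)) ^ 2 :=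
      pow_pos (fpos _ (mul_pos ha hMpos)) 2
    have h4 : 0 < (b * M / (1 + b * M)) ^ 2 :=
      pow_pos (fpos _ (mul_pos hb hMpos)) 2
    have h5 : c * M < c * N := by nlinarith
    calc c * M * ((a * M / (1 + a * M)) ^ 2 + (b * M / (1 + b * M)) ^ 2)
        < c * N * ((a * M / (1 + a * M)) ^ 2 + (b * M / (1 + b * M)) ^ 2) := by
          apply mul_lt_mul_of_pos_right h5; linarith
      _ ≤ c * N * ((a * N / (1 + a * N)) ^ 2 + (b * N / (1 + b * N)) ^ 2) := by
          apply mul_le_mul_of_nonneg_left (by linarith)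
          positivity
  · have hd : 0 < c * (a / (1 + a)) ^ 2 :=
      mul_pos hcpos (pow_pos (fpos a ha) 2)
    refine Filter.tendsto_atTop_mono' Filter.atTop
      (f₁ := fun N : ℝ => c * (a / (1 + a)) ^ 2 * N) ?_ ?_
    · filter_upwards [Filter.eventually_ge_atTop (1 : ℝ)] with N hN
      have hNpos : 0 < N := by linarith
      rw [hL' N]
      have h1 : (a / (1 + a)) ^ 2 ≤ (a * N / (1 + a * N)) ^ 2 :=
        keysq _ _ ha (by nlinarith)
      have h2 : 0 ≤ (b * N / (1 + b * N)) ^ 2 := sq_nonneg _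
      have h3 := mul_le_mul_of_nonneg_left h1 (mul_pos hcpos hNpos).le
      nlinarith [mul_nonneg (mul_pos hcpos hNpos).le h2]
    · exact Filter.tendsto_id.const_mul_atTop hd
end

section
/- Let A be an N×N complex Hermitian matrix, B an N×N Hermitian positive semidefinite matrix, q ∈ ℂᴺ, and α, α' > 0. Then |tr(A(B + αI)⁻¹ − A(B + α'qqᴴ + αI)⁻¹)| ≤ ‖A‖/α, where ‖A‖ denotes the spectral (operator) norm of A. -/
open Matrix
open scoped ComplexOrder


private lemma vecMulVec_mulVec' {n : Type*} [Fintype n] (u w x : n → ℂ) :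
    (vecMulVec u w) *ᵥ x = (w ⬝ᵥ x) • u := by
  ext i
  simp only [Matrix.mulVec, dotProduct, vecMulVec_apply, Pi.smul_apply, smul_eq_mul,
    Finset.sum_mul]
  exact Finset.sum_congr rfl fun j _ => by ring

private lemma trace_mul_vecMulVec' {n : Type*} [Fintype n] (M : Matrix n n ℂ) (u v : n → ℂ) :
    (M * vecMulVec u v).trace = v ⬝ᵥ (M *ᵥ u) := by
  simp only [Matrix.trace, Matrix.diag, Matrix.mul_apply, vecMulVec_apply, dotProduct,
    Matrix.mulVec, Finset.mul_sum]
  exact Finset.sum_congr rfl fun i _ => Finset.sum_congr rfl fun j _ => by ring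

private lemma vecMulVec_posSemidef' {n : Type*} [Fintype n] (q : n → ℂ) :
    (vecMulVec q (star q)).PosSemidef := by
  refine PosSemidef.of_dotProduct_mulVec_nonneg ?_ fun x => ?_
  · ext i j
    simp [vecMulVec_apply, Matrix.conjTranspose_apply, mul_comm]
  · rw [vecMulVec_mulVec', dotProduct_smul, smul_eq_mul, Matrix.star_dotProduct]
    exact star_mul_self_nonneg ((star x) ⬝ᵥ q)

private lemma posSemidef_real_smul' {n : Type*} [Fintype n] {M : Matrix n n ℂ}
    (hM : M.PosSemidef) {r : ℝ} (hr : 0 ≤ r) : ((r : ℂ) • M).PosSemidef := by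
  refine PosSemidef.of_dotProduct_mulVec_nonneg ?_ fun x => ?_
  · have h1 := hM.1
    unfold Matrix.IsHermitian at h1 ⊢
    rw [Matrix.conjTranspose_smul, h1]
    norm_num
  · rw [Matrix.smul_mulVec, dotProduct_smul, smul_eq_mul]
    exact mul_nonneg (Complex.zero_le_real.mpr hr) (hM.dotProduct_mulVec_nonneg x)

private lemma smul_one_posDef' {n : Type*} [Fintype n] [DecidableEq n] {a : ℝ} (ha : 0 < a) :
    ((a : ℂ) • (1 : Matrix n n ℂ)).PosDef := by
  rw [Matrix.smul_one_eq_diagonal]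
  exact Matrix.posDef_diagonal_iff.mpr fun i => by
    exact_mod_cast Complex.zero_lt_real.mpr ha

/-- Rank-1 perturbation lemma. -/
theorem rank_one_perturbation {N : ℕ}
    (A B : Matrix (Fin N) (Fin N) ℂ)
    (hA : A.IsHermitian) (hB : B.PosSemidef)
    (q : Fin N → ℂ) (α α' : ℝ) (hα : 0 < α) (hα' : 0 < α') :
    norm
      (Matrix.trace (A * (B + (α : ℂ) • (1 : Matrix (Fin N) (Fin N) ℂ))⁻¹
        - A * (B + (α' : ℂ) • Matrix.vecMulVec q (star q)
            + (α : ℂ) • (1 : Matrix (Fin N) (Fin N) ℂ))⁻¹))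
      ≤ ‖Matrix.toEuclideanCLM (𝕜 := ℂ) A‖ / α := by
  classical
  set V : Matrix (Fin N) (Fin N) ℂ := vecMulVec q (star q) with hVdef
  set C : Matrix (Fin N) (Fin N) ℂ := B + (α : ℂ) • 1 with hCdef
  set C' : Matrix (Fin N) (Fin N) ℂ := B + (α' : ℂ) • V + (α : ℂ) • 1 with hC'def
  have hVpsd : V.PosSemidef := vecMulVec_posSemidef' q
  have hone : ((α : ℂ) • (1 : Matrix (Fin N) (Fin N) ℂ)).PosDef := smul_one_posDef' hα
  have hC : C.PosDef := Matrix.PosDef.posSemidef_add hB hone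
  have hC' : C'.PosDef := Matrix.PosDef.posSemidef_add (hB.add (posSemidef_real_smul' hVpsd hα'.le)) hone
  set R : Matrix (Fin N) (Fin N) ℂ := C⁻¹ with hRdef
  set R' : Matrix (Fin N) (Fin N) ℂ := C'⁻¹ with hR'def
  have hCR : C * R = 1 := Matrix.mul_nonsing_inv C ((Matrix.isUnit_iff_isUnit_det C).mp hC.isUnit)
  have hRC : R * C = 1 := Matrix.nonsing_inv_mul C ((Matrix.isUnit_iff_isUnit_det C).mp hC.isUnit)
  have hC'R' : C' * R' = 1 :=
    Matrix.mul_nonsing_inv C' ((Matrix.isUnit_iff_isUnit_det C').mp hC'.isUnit)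
  have hR'C' : R' * C' = 1 :=
    Matrix.nonsing_inv_mul C' ((Matrix.isUnit_iff_isUnit_det C').mp hC'.isUnit)
  have hRpd : R.PosDef := hC.inv
  have hRH : Rᴴ = R := hRpd.isHermitian
  have hCC' : C' = C + (α' : ℂ) • V := by rw [hC'def, hCdef]; abel
  -- the resolvent identity
  have key : R - R' = R' * ((α' : ℂ) • V) * R := by
    have h0 : (α' : ℂ) • V = C' - C := by rw [hCC']; abel
    rw [h0, Matrix.mul_sub, Matrix.sub_mul, hR'C', one_mul, Matrix.mul_assoc, hCR, Matrix.mul_one]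
  -- trace rewriting
  set v : Fin N → ℂ := R *ᵥ q with hvdef
  have htr : (A * R - A * R').trace = (α' : ℂ) * ((star q) ⬝ᵥ ((R * A * R') *ᵥ q)) := by
    rw [← Matrix.mul_sub, key]
    have h1 : A * (R' * ((α' : ℂ) • V) * R) = (α' : ℂ) • (A * R' * V * R) := by
      simp only [Matrix.mul_smul, Matrix.smul_mul, Matrix.mul_assoc]
    rw [h1, Matrix.trace_smul, smul_eq_mul]
    congr 1
    rw [Matrix.trace_mul_comm (A * R' * V) R]
    have h2 : R * (A * R' * V) = (R * A * R') * V := by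
      simp only [Matrix.mul_assoc]
    rw [h2, hVdef, trace_mul_vecMulVec']
  -- positivity of the quadratic form
  have hs0 : 0 ≤ (star q) ⬝ᵥ v := hRpd.posSemidef.dotProduct_mulVec_nonneg q
  set s : ℝ := ((star q) ⬝ᵥ v).re with hsdef
  have hs_nonneg : 0 ≤ s := (Complex.nonneg_iff.mp hs0).1
  have hs_eq : (star q) ⬝ᵥ v = (s : ℂ) := by
    apply Complex.ext
    · simp [hsdef]
    · simp [← (Complex.nonneg_iff.mp hs0).2]
  have hCv : C *ᵥ v = q := by
    rw [hvdef, Matrix.mulVec_mulVec, hCR, Matrix.one_mulVec]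
  set t : ℝ := 1 + α' * s with htdef
  have ht : 0 < t := by positivity
  have hC'v : C' *ᵥ v = (t : ℂ) • q := by
    rw [hCC', Matrix.add_mulVec, hCv, Matrix.smul_mulVec, hVdef, vecMulVec_mulVec', hs_eq]
    ext i
    simp [htdef]
    push_cast
    ring
  have hR'q : R' *ᵥ q = ((t : ℂ))⁻¹ • v := by
    have h1 : R' *ᵥ (C' *ᵥ v) = v := by
      rw [Matrix.mulVec_mulVec, hR'C', Matrix.one_mulVec]
    rw [hC'v, Matrix.mulVec_smul] at h1
    have htne : (t : ℂ) ≠ 0 := by exact_mod_cast ht.ne'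
    rw [← h1, smul_smul, inv_mul_cancel₀ htne, one_smul]
  -- rewrite the quadratic form
  have hdot : ∀ w, (star q) ⬝ᵥ (R *ᵥ w) = (star v) ⬝ᵥ w := by
    intro w
    rw [Matrix.dotProduct_mulVec]
    congr 1
    rw [hvdef, Matrix.star_mulVec, hRH]
  have hmain : (star q) ⬝ᵥ ((R * A * R') *ᵥ q) = ((t : ℂ))⁻¹ * ((star v) ⬝ᵥ (A *ᵥ v)) := by
    have h2 : (R * A * R') *ᵥ q = ((t : ℂ))⁻¹ • (R *ᵥ (A *ᵥ v)) := by
      rw [← Matrix.mulVec_mulVec, hR'q, Matrix.mulVec_smul, ← Matrix.mulVec_mulVec]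
    rw [h2, dotProduct_smul, smul_eq_mul, hdot]
  -- Euclidean space bound
  set w : EuclideanSpace ℂ (Fin N) := (WithLp.equiv 2 _).symm v with hwdef
  set Acl := Matrix.toEuclideanCLM (𝕜 := ℂ) A with hAcl
  have hinner : (star v) ⬝ᵥ (A *ᵥ v) = (inner ℂ w (Acl w) : ℂ) := by
    rw [hwdef, hAcl]; exact dotProduct_comm _ _
  have habs : ‖(star v) ⬝ᵥ (A *ᵥ v)‖ ≤ ‖Acl‖ * ‖w‖ ^ 2 := by
    rw [hinner]
    calc ‖(inner ℂ w (Acl w) : ℂ)‖ ≤ ‖w‖ * ‖Acl w‖ := norm_inner_le_norm w (Acl w)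
      _ ≤ ‖w‖ * (‖Acl‖ * ‖w‖) := by
          exact mul_le_mul_of_nonneg_left (Acl.le_opNorm w) (norm_nonneg w)
      _ = ‖Acl‖ * ‖w‖ ^ 2 := by ring
  -- bound on ‖w‖²
  have hvv : (star v) ⬝ᵥ v = ((‖w‖ ^ 2 : ℝ) : ℂ) := by
    have h3 : (inner ℂ w w : ℂ) = (star v) ⬝ᵥ v := by
      rw [hwdef]; exact dotProduct_comm _ _
    rw [← h3, inner_self_eq_norm_sq_to_K]
    norm_cast
  have hvq : (star v) ⬝ᵥ q = (s : ℂ) := by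
    rw [Matrix.star_dotProduct, hs_eq]
    simp
  have hwbound : α * ‖w‖ ^ 2 ≤ s := by
    have h4 : (star v) ⬝ᵥ (C *ᵥ v) = (s : ℂ) := by rw [hCv, hvq]
    rw [hCdef, Matrix.add_mulVec, dotProduct_add, Matrix.smul_mulVec,
      Matrix.one_mulVec, dotProduct_smul, smul_eq_mul, hvv] at h4
    have h5 := congrArg Complex.re h4
    have h6 : 0 ≤ ((star v) ⬝ᵥ (B *ᵥ v)).re := (Complex.nonneg_iff.mp (hB.dotProduct_mulVec_nonneg v)).1
    simp only [Complex.add_re, Complex.mul_re, Complex.ofReal_re, Complex.ofReal_im] at h5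
    simp at h5
    linarith
  -- put everything together
  rw [htr, hmain]
  have habs2 : ‖(α' : ℂ) * (((t : ℂ))⁻¹ * ((star v) ⬝ᵥ (A *ᵥ v)))‖
      = α' * (t⁻¹ * ‖(star v) ⬝ᵥ (A *ᵥ v)‖) := by
    rw [norm_mul, norm_mul, norm_inv, Complex.norm_real, Complex.norm_real, Real.norm_eq_abs,
      Real.norm_eq_abs,
      abs_of_nonneg hα'.le, abs_of_nonneg ht.le]
  rw [habs2]
  have hnA : 0 ≤ ‖Acl‖ := norm_nonneg _
  have step1 : α' * (t⁻¹ * ‖(star v) ⬝ᵥ (A *ᵥ v)‖)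
      ≤ α' * (t⁻¹ * (‖Acl‖ * ‖w‖ ^ 2)) := by
    have := mul_le_mul_of_nonneg_left habs (inv_nonneg.mpr ht.le)
    exact mul_le_mul_of_nonneg_left this hα'.le
  refine le_trans step1 ?_
  have heq : α' * (t⁻¹ * (‖Acl‖ * ‖w‖ ^ 2)) = (α' * (‖Acl‖ * ‖w‖ ^ 2)) / t := by ring
  rw [heq, div_le_div_iff₀ ht hα]
  have h7 : α' * (‖Acl‖ * (α * ‖w‖ ^ 2)) ≤ α' * (‖Acl‖ * s) :=
    mul_le_mul_of_nonneg_left (mul_le_mul_of_nonneg_left hwbound hnA) hα'.le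
  calc α' * (‖Acl‖ * ‖w‖ ^ 2) * α = α' * (‖Acl‖ * (α * ‖w‖ ^ 2)) := by ring
    _ ≤ α' * (‖Acl‖ * s) := h7
    _ ≤ ‖Acl‖ * t := by rw [htdef]; nlinarith [hnA]
end
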